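/- Assume the Hessian ∇²A(θπ), regarded as a self-adjoint linear map on H, is invertible with inverse J. Define G(θ) = ∇A(θ) − ∇A(α θπ + (1−α) θ), which is the gradient of g at θ. Then as θ → θπ, g(θ) − (1/(2α)) · ⟨J G(θ), G(θ)⟩ = o(‖θ − θπ‖²); in particular g satisfies the Polyak–Łojasiewicz-type inequality g(θ) ≤ (1/(2α)) · ⟨J G(θ), G(θ)⟩ + o(‖θ − θπ‖²) around θπ. -/

import Mathlib

open Real Topology Asymptotics
open scoped RealInnerProductSpace

set_option maxHeartbeats 1000000 in
/-- Polyak–Łojasiewicz-type expansion around `θπ`: with `J` the inverse of the Hessian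
`∇²A(θπ)` and `G θ = ∇A θ - ∇A (α θπ + (1-α) θ)` the gradient of
`g θ = (1/(1-α)) (α A θπ + (1-α) A θ - A (α θπ + (1-α) θ))`, one has
`g θ - (1/(2α)) ⟪J (G θ), G θ⟫ = o(‖θ - θπ‖²)` as `θ → θπ`; in particular
`g θ ≤ (1/(2α)) ⟪J (G θ), G θ⟫ + o(‖θ - θπ‖²)` around `θπ`. -/
theorem statement11
    {H : Type*} [NormedAddCommGroup H] [InnerProductSpace ℝ H] [FiniteDimensional ℝ H]
    (U : Set H) (hUo : IsOpen U)
    (A : H → ℝ) (hA : ContDiffOn ℝ 2 A U)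
    (θπ : H) (hθπ : θπ ∈ U)
    (α : ℝ) (hα : 0 < α) (hα1 : α ≠ 1)
    (g : H → ℝ)
    (hg : ∀ θ, g θ = (1/(1-α)) * (α * A θπ + (1-α) * A θ - A (α • θπ + (1-α) • θ)))
    (gA : H → H) (hgA : ∀ θ ∈ U, HasGradientAt A (gA θ) θ)
    (Hess J : H →L[ℝ] H)
    (hHess : ∀ v w : H, ⟪Hess v, w⟫ = iteratedFDerivWithin ℝ 2 A U θπ ![v, w])
    (hJ1 : ∀ v, J (Hess v) = v) (hJ2 : ∀ v, Hess (J v) = v)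
    (G : H → H) (hG : ∀ θ, G θ = gA θ - gA (α • θπ + (1-α) • θ)) :
    ((fun θ => g θ - (1/(2*α)) * ⟪J (G θ), G θ⟫)
        =o[𝓝 θπ] (fun θ => ‖θ - θπ‖ ^ 2)) ∧
    ∃ e : H → ℝ, (e =o[𝓝 θπ] fun θ => ‖θ - θπ‖ ^ 2) ∧
      ∀ᶠ θ in 𝓝 θπ, g θ ≤ (1/(2*α)) * ⟪J (G θ), G θ⟫ + e θ := by
  have hα1' : (1:ℝ) - α ≠ 0 := sub_ne_zero.2 (Ne.symm hα1)
  -- Step 1: the derivative of gA at θπ is Hess, and Hess is symmetric.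
  set F : H → H →L[ℝ] ℝ := fderiv ℝ A with hF
  have hFc : ContDiffOn ℝ 1 F U := hA.fderiv_of_isOpen hUo le_rfl
  have hFd : DifferentiableAt ℝ F θπ :=
    (hFc.differentiableOn one_ne_zero θπ hθπ).differentiableAt (hUo.mem_nhds hθπ)
  set B : H →L[ℝ] H →L[ℝ] ℝ := fderiv ℝ F θπ with hB
  have hBF : HasFDerivAt F B θπ := hFd.hasFDerivAt
  have hAF : ∀ y ∈ U, HasFDerivAt A (F y) y := by
    intro y hy
    exact ((hA.differentiableOn (by norm_num) y hy).differentiableAt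
      (hUo.mem_nhds hy)).hasFDerivAt
  have hHB : ∀ v w, ⟪Hess v, w⟫ = B v w := by
    intro v w
    rw [hHess v w, iteratedFDerivWithin_two_apply A hUo.uniqueDiffOn hθπ]
    have h1 : fderivWithin ℝ (fderivWithin ℝ A U) U θπ = B := by
      rw [fderivWithin_of_isOpen hUo hθπ]
      apply Filter.EventuallyEq.fderiv_eq
      filter_upwards [hUo.mem_nhds hθπ] with y hy using fderivWithin_of_isOpen hUo hy
    rw [h1]
    simp
  have hgAF : ∀ y ∈ U, gA y = (InnerProductSpace.toDual ℝ H).symm (F y) := by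
    intro y hy
    have h2 : F y = InnerProductSpace.toDual ℝ H (gA y) := by
      rw [hF]; exact ((hgA y hy).hasFDerivAt).fderiv
    simp [h2]
  have hdual : ∀ v : H, InnerProductSpace.toDual ℝ H (Hess v) = B v := by
    intro v
    ext w
    simpa [InnerProductSpace.toDual_apply_apply] using hHB v w
  have hkey : HasFDerivAt gA Hess θπ := by
    refine .of_isLittleO ?_
    have h := hBF.isLittleO
    rw [← isLittleO_norm_left] at h ⊢
    apply h.congr' _ Filter.EventuallyEq.rfl
    filter_upwards [hUo.mem_nhds hθπ] with y hy
    have : F y - F θπ - B (y - θπ)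
        = InnerProductSpace.toDual ℝ H (gA y - gA θπ - Hess (y - θπ)) := by
      rw [hgAF y hy, hgAF θπ hθπ]
      simp [map_sub, hdual]
    rw [this]
    exact (InnerProductSpace.toDual ℝ H).norm_map _
  have hsymB : ∀ v w, B v w = B w v :=
    second_derivative_symmetric_of_eventually
      (Filter.eventually_iff_exists_mem.2 ⟨U, hUo.mem_nhds hθπ, hAF⟩) hBF
  have hHsym : ∀ v w, ⟪Hess v, w⟫ = ⟪v, Hess w⟫ := by
    intro v w
    rw [hHB v w, hsymB v w, ← hHB w v, real_inner_comm]
  -- the affine contraction φ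
  set φ : H → H := fun θ => α • θπ + (1-α) • θ with hφ
  have hφπ : φ θπ = θπ := by
    simp only [hφ, ← add_smul]
    norm_num
  have hφd : ∀ x : H, HasFDerivAt φ ((1-α) • (ContinuousLinearMap.id ℝ H)) x := by
    intro x
    exact ((hasFDerivAt_id x).const_smul (1-α)).const_add (α • θπ)
  -- derivative of G at θπ
  have hGd : HasFDerivAt G (α • Hess) θπ := by
    have h2 : HasFDerivAt (fun θ => gA (φ θ))
        (Hess.comp ((1-α) • (ContinuousLinearMap.id ℝ H))) θπ :=
      HasFDerivAt.comp θπ (by rw [hφπ]; exact hkey) (hφd θπ)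
    have h3 := hkey.sub h2
    have h4 : (fun θ => gA θ - gA (φ θ)) = G := by
      funext θ; rw [hG θ]
    rw [show (gA - fun θ => gA (φ θ)) = G from h4] at h3
    convert h3 using 1
    ext v
    simp [sub_smul]
  have hGπ : G θπ = 0 := by
    rw [hG θπ, show α • θπ + (1-α) • θπ = θπ from hφπ, sub_self]
  -- the remainder r
  set r : H → H := fun θ => G θ - α • Hess (θ - θπ) with hrdef
  have hr : r =o[𝓝 θπ] fun θ => ‖θ - θπ‖ := by
    rw [isLittleO_norm_right]
    have := hGd.isLittleO
    simpa [hGπ, hrdef] using this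
  -- derivative of ψ := g - (α/2) q at points near θπ
  set q : H → ℝ := fun θ => ⟪Hess (θ - θπ), θ - θπ⟫ with hq
  set ψ : H → ℝ := fun θ => g θ - (α/2) * q θ with hψ
  have hψd : ∀ x, x ∈ U → φ x ∈ U → HasFDerivAt ψ (innerSL ℝ (r x)) x := by
    intro x hx hφx
    have hdual2 : ∀ v : H, (InnerProductSpace.toDual ℝ H v : H →L[ℝ] ℝ) = innerSL ℝ v := by
      intro v; ext w; simp
    have hAx : HasFDerivAt A (innerSL ℝ (gA x)) x := by
      have := (hgA x hx).hasFDerivAt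
      rwa [hdual2] at this
    have hAφx : HasFDerivAt (fun θ => A (φ θ)) ((1-α) • innerSL ℝ (gA (φ x))) x := by
      have h0 : HasFDerivAt A (innerSL ℝ (gA (φ x))) (φ x) := by
        have := (hgA (φ x) hφx).hasFDerivAt
        rwa [hdual2] at this
      have := h0.comp x (hφd x)
      refine this.congr_fderiv ?_
      ext w
      simp [real_inner_smul_right]
    have hg1 : HasFDerivAt (fun θ : H => θ - θπ) (ContinuousLinearMap.id ℝ H) x :=
      (hasFDerivAt_id x).sub_const θπ
    have hf1 : HasFDerivAt (fun θ : H => Hess (θ - θπ)) Hess x := by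
      have h := Hess.hasFDerivAt.comp x hg1
      simp only [Function.comp_def] at h
      convert h using 1
      exact (ContinuousLinearMap.comp_id Hess).symm
    have hqd : HasFDerivAt q
        ((fderivInnerCLM ℝ (Hess (x - θπ), x - θπ)).comp
          (Hess.prod (ContinuousLinearMap.id ℝ H))) x := hf1.inner ℝ hg1
    have hgeq : ∀ θ, ψ θ = ((α/(1-α)) * A θπ + A θ - (1/(1-α)) * A (φ θ)) - (α/2) * q θ := by
      intro θ
      rw [hψ]
      simp only [hg θ, ← hφ]
      field_simp
      ring
    have hbig : HasFDerivAt
        (fun θ => ((α/(1-α)) * A θπ + A θ - (1/(1-α)) * A (φ θ)) - (α/2) * q θ)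
        ((innerSL ℝ (gA x) - (1/(1-α)) • ((1-α) • innerSL ℝ (gA (φ x))))
          - (α/2) • ((fderivInnerCLM ℝ (Hess (x - θπ), x - θπ)).comp
            (Hess.prod (ContinuousLinearMap.id ℝ H)))) x :=
      ((hAx.const_add _).sub (hAφx.const_mul (1/(1-α)))).sub (hqd.const_mul (α/2))
    have hψeq : HasFDerivAt ψ
        ((innerSL ℝ (gA x) - (1/(1-α)) • ((1-α) • innerSL ℝ (gA (φ x))))
          - (α/2) • ((fderivInnerCLM ℝ (Hess (x - θπ), x - θπ)).comp
            (Hess.prod (ContinuousLinearMap.id ℝ H)))) x := by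
      apply hbig.congr_of_eventuallyEq
      exact Filter.Eventually.of_forall fun θ => (hgeq θ)
    convert hψeq using 1
    ext w
    have hsw : ⟪Hess w, x - θπ⟫ = ⟪Hess (x - θπ), w⟫ := by
      rw [hHsym w (x - θπ)]; exact real_inner_comm _ _
    simp only [innerSL_apply_apply, ContinuousLinearMap.sub_apply, ContinuousLinearMap.smul_apply,
      ContinuousLinearMap.comp_apply, ContinuousLinearMap.prod_apply,
      ContinuousLinearMap.coe_id', id_eq, fderivInnerCLM_apply, smul_eq_mul]
    rw [hrdef]
    simp only [hG x, ← hφ]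
    rw [inner_sub_left, inner_sub_left, real_inner_smul_left, hsw]
    field_simp
    ring
  -- a neighborhood contained in U whose image under φ is in U
  have hφc : Continuous φ := by
    rw [hφ]; fun_prop
  have hUφ : U ∩ φ ⁻¹' U ∈ 𝓝 θπ := by
    refine Filter.inter_mem (hUo.mem_nhds hθπ) ?_
    exact hφc.continuousAt.preimage_mem_nhds (by rw [hφπ]; exact hUo.mem_nhds hθπ)
  obtain ⟨δ, hδpos, hδ⟩ := Metric.mem_nhds_iff.1 hUφ
  have hψπ : ψ θπ = 0 := by
    have h1 : g θπ = 0 := by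
      rw [hg θπ, show α • θπ + (1-α) • θπ = θπ from hφπ]; ring
    simp [hψ, hq, h1]
  -- Part A: second-order expansion of g via the mean value inequality
  have hqA : (fun θ => g θ - (α/2) * q θ) =o[𝓝 θπ] (fun θ => ‖θ - θπ‖^2) := by
    rw [isLittleO_iff]
    intro ε hε
    obtain ⟨δ₁, hδ₁pos, hδ₁⟩ := Metric.eventually_nhds_iff.1 (isLittleO_iff.1 hr hε)
    have hδ₂pos : 0 < min δ δ₁ := lt_min hδpos hδ₁pos
    filter_upwards [Metric.ball_mem_nhds θπ hδ₂pos] with θ hθ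
    have hθn : ‖θ - θπ‖ < min δ δ₁ := by rwa [Metric.mem_ball, dist_eq_norm] at hθ
    have hsub : Metric.closedBall θπ ‖θ - θπ‖ ⊆ Metric.ball θπ δ :=
      Metric.closedBall_subset_ball (lt_of_lt_of_le hθn (min_le_left _ _))
    have hball : ∀ x ∈ Metric.closedBall θπ ‖θ - θπ‖, x ∈ U ∧ φ x ∈ U := fun x hxx =>
      ⟨(hδ (hsub hxx)).1, (hδ (hsub hxx)).2⟩
    have hbound : ∀ x ∈ Metric.closedBall θπ ‖θ - θπ‖,
        ‖innerSL ℝ (r x)‖ ≤ ε * ‖θ - θπ‖ := by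
      intro x hxx
      rw [innerSL_apply_norm]
      have hx2 : ‖x - θπ‖ ≤ ‖θ - θπ‖ := by
        have := Metric.mem_closedBall.1 hxx; rwa [dist_eq_norm] at this
      have hx1 : ‖r x‖ ≤ ε * ‖x - θπ‖ := by
        have hd : dist x θπ < δ₁ := by
          rw [dist_eq_norm]
          exact lt_of_le_of_lt hx2 (lt_of_lt_of_le hθn (min_le_right _ _))
        simpa using hδ₁ hd
      calc ‖r x‖ ≤ ε * ‖x - θπ‖ := hx1
        _ ≤ ε * ‖θ - θπ‖ := mul_le_mul_of_nonneg_left hx2 hε.le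
    have hmvt := (convex_closedBall θπ ‖θ - θπ‖).norm_image_sub_le_of_norm_hasFDerivWithin_le
      (fun x hxx => (hψd x (hball x hxx).1 (hball x hxx).2).hasFDerivWithinAt)
      hbound (Metric.mem_closedBall_self (norm_nonneg _))
      (Metric.mem_closedBall.2 (le_of_eq (dist_eq_norm θ θπ)))
    rw [hψπ, sub_zero, hψ] at hmvt
    calc ‖g θ - (α/2) * q θ‖ ≤ ε * ‖θ - θπ‖ * ‖θ - θπ‖ := hmvt
      _ = ε * ‖‖θ - θπ‖^2‖ := by
          rw [Real.norm_of_nonneg (by positivity)]; ring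
  -- Part B: the quadratic form in terms of G
  have hBexp : ∀ θ, (1/(2*α)) * ⟪J (G θ), G θ⟫ - (α/2) * q θ
      = (1/2) * ⟪θ - θπ, r θ⟫ + (1/2) * ⟪J (r θ), Hess (θ - θπ)⟫
        + (1/(2*α)) * ⟪J (r θ), r θ⟫ := by
    intro θ
    have hGr : G θ = α • Hess (θ - θπ) + r θ := by
      rw [hrdef]; rw [add_comm, sub_add_cancel]
    have hJG : J (G θ) = α • (θ - θπ) + J (r θ) := by
      rw [hGr, map_add, map_smul, hJ1]
    rw [hJG, hGr]
    simp only [hq]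
    simp only [inner_add_left, inner_add_right, real_inner_smul_left, real_inner_smul_right]
    rw [real_inner_comm (θ - θπ) (Hess (θ - θπ))]
    field_simp
    ring
  have hB : (fun θ => (1/(2*α)) * ⟪J (G θ), G θ⟫ - (α/2) * q θ)
      =o[𝓝 θπ] (fun θ => ‖θ - θπ‖^2) := by
    have hO : (fun θ => (1/(2*α)) * ⟪J (G θ), G θ⟫ - (α/2) * q θ)
        =O[𝓝 θπ] (fun θ => ‖r θ‖ * ‖θ - θπ‖) := by
      apply IsBigO.of_bound ((1/2) + (1/2) * ‖J‖ * ‖Hess‖ + (1/(2*α)) * ‖J‖)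
      filter_upwards [isLittleO_iff.1 hr one_pos] with θ hθ1
      have hru : ‖r θ‖ ≤ ‖θ - θπ‖ := by simpa using hθ1
      rw [hBexp θ]
      have e1 : |⟪θ - θπ, r θ⟫| ≤ ‖θ - θπ‖ * ‖r θ‖ := abs_real_inner_le_norm _ _
      have e2 : |⟪J (r θ), Hess (θ - θπ)⟫| ≤ (‖J‖ * ‖r θ‖) * (‖Hess‖ * ‖θ - θπ‖) :=
        le_trans (abs_real_inner_le_norm _ _)
          (mul_le_mul (J.le_opNorm _) (Hess.le_opNorm _) (norm_nonneg _) (by positivity))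
      have e3 : |⟪J (r θ), r θ⟫| ≤ (‖J‖ * ‖r θ‖) * ‖r θ‖ :=
        le_trans (abs_real_inner_le_norm _ _)
          (mul_le_mul_of_nonneg_right (J.le_opNorm _) (norm_nonneg _))
      rw [Real.norm_of_nonneg (by positivity : (0:ℝ) ≤ ‖r θ‖ * ‖θ - θπ‖), Real.norm_eq_abs]
      have hstep1 : |1/2 * ⟪θ - θπ, r θ⟫ + 1/2 * ⟪J (r θ), Hess (θ - θπ)⟫
          + 1/(2*α) * ⟪J (r θ), r θ⟫|
          ≤ |1/2 * ⟪θ - θπ, r θ⟫| + |1/2 * ⟪J (r θ), Hess (θ - θπ)⟫|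
            + |1/(2*α) * ⟪J (r θ), r θ⟫| :=
        le_trans (abs_add_le _ _) (by gcongr; exact abs_add_le _ _)
      refine le_trans hstep1 ?_
      rw [abs_mul, abs_mul, abs_mul,
        abs_of_pos (by norm_num : (0:ℝ) < 1/2),
        abs_of_pos (by positivity : (0:ℝ) < 1/(2*α))]
      calc 1/2 * |⟪θ - θπ, r θ⟫| + 1/2 * |⟪J (r θ), Hess (θ - θπ)⟫|
            + 1/(2*α) * |⟪J (r θ), r θ⟫|
          ≤ 1/2 * (‖θ - θπ‖ * ‖r θ‖) + 1/2 * ((‖J‖ * ‖r θ‖) * (‖Hess‖ * ‖θ - θπ‖))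
            + 1/(2*α) * ((‖J‖ * ‖r θ‖) * ‖r θ‖) := by
            gcongr <;> positivity
        _ ≤ 1/2 * (‖θ - θπ‖ * ‖r θ‖) + 1/2 * ((‖J‖ * ‖r θ‖) * (‖Hess‖ * ‖θ - θπ‖))
            + 1/(2*α) * ((‖J‖ * ‖r θ‖) * ‖θ - θπ‖) := by
            gcongr
        _ = (1/2 + 1/2 * ‖J‖ * ‖Hess‖ + 1/(2*α) * ‖J‖) * (‖r θ‖ * ‖θ - θπ‖) := by ring
    have hlo : (fun θ => ‖r θ‖ * ‖θ - θπ‖) =o[𝓝 θπ] (fun θ => ‖θ - θπ‖^2) := by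
      have := hr.norm_left.mul_isBigO (isBigO_refl (fun θ : H => ‖θ - θπ‖) (𝓝 θπ))
      simpa [pow_two] using this
    exact hO.trans_isLittleO hlo
  -- combine
  have hmain : (fun θ => g θ - (1/(2*α)) * ⟪J (G θ), G θ⟫)
      =o[𝓝 θπ] (fun θ => ‖θ - θπ‖ ^ 2) := by
    have := hqA.sub hB
    refine this.congr' (Filter.Eventually.of_forall fun θ => by ring) Filter.EventuallyEq.rfl
  refine ⟨hmain, fun θ => g θ - (1/(2*α)) * ⟪J (G θ), G θ⟫, hmain, ?_⟩
  exact Filter.Eventually.of_forall fun θ => le_of_eq (by ring)
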